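/- Let α ∈ (0,1) and for each integer k ≥ 2 set φ₁(k) = π(k−1)/(2(k−α)) and a^{(k)} = 2^{α−1} k^α cos(φ₁(k))^α / cos(α φ₁(k)). Then the sequence (a^{(k)})_{k≥2} is strictly increasing in k, and a^{(k)} → ((1−α)π)^α sin(απ/2)/sin(απ) as k → ∞. -/

import Mathlib

open Real

/-- The first coordinate `a^{(k)} = 2^{α−1} k^α cos(φ₁(k))^α / cos(α φ₁(k))`, with
`φ₁(k) = π(k−1)/(2(k−α))`, of the vertex of the numerical stability region of the
Grünwald–Letnikov scheme with step size `h = 1/k`. -/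
noncomputable def aVertex (α : ℝ) (k : ℕ) : ℝ :=
  2 ^ (α - 1) * (k:ℝ) ^ α *
    Real.cos (Real.pi * ((k:ℝ) - 1) / (2 * ((k:ℝ) - α))) ^ α /
    Real.cos (α * (Real.pi * ((k:ℝ) - 1) / (2 * ((k:ℝ) - α))))

open Set


lemma my_mul_cos_le_sin {x : ℝ} (h0 : 0 ≤ x) (h1 : x ≤ π/2) :
    x * Real.cos x ≤ Real.sin x := by
  rcases eq_or_lt_of_le h0 with rfl|h0'
  · simp
  rcases eq_or_lt_of_le h1 with rfl|h1'
  · simp [Real.cos_pi_div_two]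
  · have hc : 0 < Real.cos x := Real.cos_pos_of_mem_Ioo ⟨by linarith [Real.pi_pos], h1'⟩
    have h := Real.lt_tan h0' h1'
    rw [Real.tan_eq_sin_div_cos, lt_div_iff₀ hc] at h
    linarith

lemma my_sub_sin_le {x : ℝ} (h0 : 0 ≤ x) : x - Real.sin x ≤ x^3/6 := by
  have hmono : Monotone (fun x : ℝ => Real.sin x - x + x^3/6) := by
    apply monotone_of_deriv_nonneg
    · exact fun x => (((Real.differentiable_sin x).sub (differentiable_id x)).add
        ((differentiable_pow 3 x).div_const 6))
    · intro x
      have hd : HasDerivAt (fun x : ℝ => Real.sin x - x + x^3/6)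
          (Real.cos x - 1 + (3*x^2)/6) x := by
        have := ((Real.hasDerivAt_sin x).sub (hasDerivAt_id x)).add
          ((hasDerivAt_pow 3 x).div_const 6)
        exact this.congr_deriv (by norm_num)
      rw [hd.deriv]
      have := Real.one_sub_sq_div_two_le_cos (x := x)
      nlinarith
  have := hmono h0
  simp at this
  nlinarith

lemma my_sin_cube {x : ℝ} (h0 : 0 ≤ x) (h1 : x ≤ π/2) :
    x^3 * Real.cos x ≤ (Real.sin x)^3 := by
  have hmono : MonotoneOn (fun x : ℝ => (Real.sin x)^3 - x^3 * Real.cos x) (Icc 0 (π/2)) := by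
    have hd : ∀ x : ℝ, HasDerivAt (fun x : ℝ => (Real.sin x)^3 - x^3 * Real.cos x)
        (3*(Real.sin x)^2*Real.cos x - (3*x^2*Real.cos x + x^3*(-Real.sin x))) x := by
      intro x
      have h1 := (Real.hasDerivAt_sin x).pow 3
      have h2 := (hasDerivAt_pow 3 x).mul (Real.hasDerivAt_cos x)
      exact (h1.sub h2).congr_deriv (by norm_num)
    apply monotoneOn_of_deriv_nonneg (convex_Icc _ _)
    · exact fun x _ => ((hd x).continuousAt).continuousWithinAt
    · exact fun x _ => ((hd x).differentiableAt).differentiableWithinAt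
    · intro x hx
      rw [interior_Icc] at hx
      rw [(hd x).deriv]
      obtain ⟨hx0, hx2⟩ := hx
      have hc : 0 ≤ Real.cos x := Real.cos_nonneg_of_mem_Icc
        ⟨by linarith [Real.pi_pos], le_of_lt hx2⟩
      have hs1 : Real.sin x ≤ x := Real.sin_le (le_of_lt hx0)
      have hs2 : x - Real.sin x ≤ x^3/6 := my_sub_sin_le (le_of_lt hx0)
      have hs3 : x * Real.cos x ≤ Real.sin x := my_mul_cos_le_sin (le_of_lt hx0) (le_of_lt hx2)
      have hs0 : 0 ≤ Real.sin x := Real.sin_nonneg_of_nonneg_of_le_pi (le_of_lt hx0)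
        (by linarith [Real.pi_pos])
      have h4 : (x - Real.sin x)*(x + Real.sin x) ≤ (x^3/6)*(2*x) :=
        mul_le_mul hs2 (by linarith) (by linarith) (by positivity)
      nlinarith [mul_le_mul_of_nonneg_left h4 (by positivity : (0:ℝ) ≤ 3*Real.cos x),
        mul_le_mul_of_nonneg_left hs3 (pow_nonneg (le_of_lt hx0) 3)]
  have := hmono (left_mem_Icc.2 (by linarith [Real.pi_pos])) ⟨h0, h1⟩ h0
  simp at this
  linarith
noncomputable def pfun (x : ℝ) : ℝ := 1/x - Real.cos x / Real.sin x

lemma pfun_hasDerivAt {x : ℝ} (h0 : 0 < x) (h1 : x < π) :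
    HasDerivAt pfun (1/(Real.sin x)^2 - 1/x^2) x := by
  have hs : Real.sin x ≠ 0 := (Real.sin_pos_of_pos_of_lt_pi h0 h1).ne'
  have h2 := (Real.hasDerivAt_cos x).div (Real.hasDerivAt_sin x) hs
  have h3 : HasDerivAt (fun x : ℝ => 1/x) (-(1/x^2)) x := by
    simpa [one_div] using (hasDerivAt_inv h0.ne')
  show HasDerivAt (fun x : ℝ => 1/x - Real.cos x / Real.sin x) _ x
  refine (h3.sub h2).congr_deriv ?_
  have hpy : (-Real.sin x * Real.sin x - Real.cos x * Real.cos x) = -1 := by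
    nlinarith [Real.sin_sq_add_cos_sq x]
  rw [hpy]
  field_simp
  ring

lemma pfun_deriv2 {x : ℝ} (h0 : 0 < x) (h1 : x < π) :
    HasDerivAt (fun x => 1/(Real.sin x)^2 - 1/x^2) (-(2*Real.cos x)/(Real.sin x)^3 + 2/x^3) x := by
  have hs : Real.sin x ≠ 0 := (Real.sin_pos_of_pos_of_lt_pi h0 h1).ne'
  have h2 : HasDerivAt (fun x : ℝ => 1/(Real.sin x)^2)
      (-((2:ℕ) * Real.sin x ^ (2-1) * Real.cos x)/((Real.sin x)^2)^2) x := by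
    simp only [one_div]; exact (((Real.hasDerivAt_sin x).pow 2).inv (pow_ne_zero 2 hs))
  have h3 : HasDerivAt (fun x : ℝ => 1/x^2) (-((2:ℕ) * x ^ (2-1))/(x^2)^2) x := by
    simp only [one_div]; exact ((hasDerivAt_pow 2 x).inv (pow_ne_zero 2 h0.ne'))
  refine (h2.sub h3).congr_deriv ?_
  push_cast
  field_simp
  ring

lemma pfun_convex : ConvexOn ℝ (Ioc 0 (π/2)) pfun := by
  have hπ := Real.pi_pos
  have hmem : ∀ x ∈ interior (Ioc (0:ℝ) (π/2)), 0 < x ∧ x < π := by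
    intro x hx
    rw [interior_Ioc] at hx
    exact ⟨hx.1, by linarith [hx.2]⟩
  apply convexOn_of_hasDerivWithinAt2_nonneg (convex_Ioc _ _)
    (f' := fun x => 1/(Real.sin x)^2 - 1/x^2)
    (f'' := fun x => -(2*Real.cos x)/(Real.sin x)^3 + 2/x^3)
  · intro x hx
    exact (pfun_hasDerivAt hx.1 (by linarith [hx.2])).continuousAt.continuousWithinAt
  · intro x hx
    obtain ⟨h0, h1⟩ := hmem x hx
    exact (pfun_hasDerivAt h0 h1).hasDerivWithinAt
  · intro x hx
    obtain ⟨h0, h1⟩ := hmem x hx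
    exact (pfun_deriv2 h0 h1).hasDerivWithinAt
  · intro x hx
    rw [interior_Ioc] at hx
    obtain ⟨h0, h1⟩ := hx
    have hs : 0 < Real.sin x := Real.sin_pos_of_pos_of_lt_pi h0 (by linarith)
    have hcube := my_sin_cube h0.le h1.le
    have h3 : (0:ℝ) < x^3 := by positivity
    have h4 : (0:ℝ) < (Real.sin x)^3 := by positivity
    rw [div_add_div _ _ (by positivity) (by positivity), le_div_iff₀ (by positivity)]
    nlinarith

lemma pfun_nonneg {x : ℝ} (h0 : 0 < x) (h1 : x ≤ π/2) : 0 ≤ pfun x := by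
  have hs : 0 < Real.sin x := Real.sin_pos_of_pos_of_lt_pi h0
    (by linarith [Real.pi_pos])
  have := my_mul_cos_le_sin h0.le h1
  rw [pfun, sub_nonneg, div_le_div_iff₀ hs h0]
  nlinarith

lemma pfun_pi_div_two : pfun (π/2) = 2/π := by
  simp [pfun, Real.cos_pi_div_two]

/-- The core inequality. -/
lemma key_ineq {α ψ s : ℝ} (hα0 : 0 < α) (hα1 : α < 1) (hψ0 : 0 < ψ) (hψ : ψ < π/2)
    (hs_def : s = π*(1-α)/2 + α*ψ) :
    α/s - Real.cos s/Real.sin s < 1/ψ - Real.cos ψ/Real.sin ψ := by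
  have hπ := Real.pi_pos
  have h1α : (0:ℝ) < 1 - α := by linarith
  have hs0 : 0 < s := by rw [hs_def]; positivity
  have hsπ : s < π/2 := by nlinarith [mul_pos hα0 (sub_pos.2 hψ)]
  have hconv := pfun_convex.2 (⟨hψ0, hψ.le⟩ : ψ ∈ Ioc (0:ℝ) (π/2))
    (⟨by linarith, le_refl _⟩ : π/2 ∈ Ioc (0:ℝ) (π/2)) hα0.le h1α.le (by ring)
  simp only [smul_eq_mul] at hconv
  have hpt : α * ψ + (1-α) * (π/2) = s := by rw [hs_def]; ring
  rw [hpt, pfun_pi_div_two] at hconv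
  have hp0 := pfun_nonneg hψ0 hψ.le
  have h2π : 2/π < 1/s := by
    rw [div_lt_div_iff₀ hπ hs0]; nlinarith
  have hfin : pfun s - (1-α)*(1/s) < pfun ψ := by
    nlinarith [mul_lt_mul_of_pos_left h2π h1α, mul_nonneg h1α.le hp0]
  have hsplit : (1:ℝ)/s - (1-α)*(1/s) = α/s := by
    field_simp
    ring
  simp only [pfun] at hfin
  linarith [hsplit]

lemma bracket_eq {α t cψ sψ cs ss : ℝ} (hα0 : 0 < α) (hα1 : α < 1) (ht : 2 ≤ t)
    (hsψ : sψ ≠ 0) (hss : ss ≠ 0) :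
    α * t⁻¹ + α * ((-cψ * (π*(1-α)/(2*(t-α)^2))) / sψ)
      - (-cs * (α * (π*(1-α)/(2*(t-α)^2)))) / ss
    = α * (π*(1-α)/(2*(t-α)^2)) *
        ((1/(π*(1-α)/(2*(t-α))) - cψ/sψ)
          - (α/(π*(1-α)/2 + α*(π*(1-α)/(2*(t-α)))) - cs/ss)) := by
  have hπ := Real.pi_pos
  have htα : (0:ℝ) < t - α := by linarith
  have h1α : (0:ℝ) < 1 - α := by linarith
  have ht0 : (0:ℝ) < t := by linarith
  have hS : π*(1-α)/2 + α*(π*(1-α)/(2*(t-α))) = π*(1-α)*t/(2*(t-α)) := by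
    field_simp; ring
  rw [hS]
  field_simp
  ring
noncomputable def Af (α t : ℝ) : ℝ :=
  2 ^ (α - 1) * t ^ α * Real.cos (Real.pi * (t - 1) / (2 * (t - α))) ^ α /
    Real.cos (α * (Real.pi * (t - 1) / (2 * (t - α))))

noncomputable def Lf (α t : ℝ) : ℝ :=
  (α - 1) * Real.log 2 + α * Real.log t
    + α * Real.log (Real.cos (Real.pi * (t - 1) / (2 * (t - α))))
    - Real.log (Real.cos (α * (Real.pi * (t - 1) / (2 * (t - α)))))

section facts
variable {α t : ℝ}

lemma facts_phi (hα0 : 0 < α) (hα1 : α < 1) (ht : 2 ≤ t) :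
    Real.pi * (t - 1) / (2 * (t - α)) = π/2 - π*(1-α)/(2*(t-α)) := by
  have htα : (0:ℝ) < t - α := by linarith
  field_simp
  ring

lemma facts_psi (hα0 : 0 < α) (hα1 : α < 1) (ht : 2 ≤ t) :
    0 < π*(1-α)/(2*(t-α)) ∧ π*(1-α)/(2*(t-α)) < π/2 := by
  have hπ := Real.pi_pos
  have htα : (0:ℝ) < t - α := by linarith
  have h1α : (0:ℝ) < 1 - α := by linarith
  constructor
  · positivity
  · rw [div_lt_div_iff₀ (by positivity) (by norm_num)]
    nlinarith

lemma facts_s (hα0 : 0 < α) (hα1 : α < 1) (ht : 2 ≤ t) :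
    0 < π*(1-α)/2 + α*(π*(1-α)/(2*(t-α)))
      ∧ π*(1-α)/2 + α*(π*(1-α)/(2*(t-α))) < π/2 := by
  have hπ := Real.pi_pos
  have htα : (0:ℝ) < t - α := by linarith
  have h1α : (0:ℝ) < 1 - α := by linarith
  obtain ⟨h1, h2⟩ := facts_psi hα0 hα1 ht
  constructor
  · positivity
  · nlinarith [mul_pos hα0 (sub_pos.2 h2)]

lemma facts_alpha_phi (hα0 : 0 < α) (hα1 : α < 1) (ht : 2 ≤ t) :
    α * (Real.pi * (t - 1) / (2 * (t - α)))
      = π/2 - (π*(1-α)/2 + α*(π*(1-α)/(2*(t-α)))) := by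
  rw [facts_phi hα0 hα1 ht]
  ring

lemma facts_cos_phi_pos (hα0 : 0 < α) (hα1 : α < 1) (ht : 2 ≤ t) :
    0 < Real.cos (Real.pi * (t - 1) / (2 * (t - α))) := by
  rw [facts_phi hα0 hα1 ht, Real.cos_pi_div_two_sub]
  obtain ⟨h1, h2⟩ := facts_psi hα0 hα1 ht
  exact Real.sin_pos_of_pos_of_lt_pi h1 (by linarith [Real.pi_pos])

lemma facts_cos_alpha_phi_pos (hα0 : 0 < α) (hα1 : α < 1) (ht : 2 ≤ t) :
    0 < Real.cos (α * (Real.pi * (t - 1) / (2 * (t - α)))) := by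
  rw [facts_alpha_phi hα0 hα1 ht, Real.cos_pi_div_two_sub]
  obtain ⟨h1, h2⟩ := facts_s hα0 hα1 ht
  exact Real.sin_pos_of_pos_of_lt_pi h1 (by linarith [Real.pi_pos])

lemma Lf_hasDerivAt (hα0 : 0 < α) (hα1 : α < 1) (ht : 2 ≤ t) :
    HasDerivAt (Lf α)
      (α * t⁻¹
        + α * ((-Real.sin (Real.pi * (t - 1) / (2 * (t - α))) * (π*(1-α)/(2*(t-α)^2)))
            / Real.cos (Real.pi * (t - 1) / (2 * (t - α))))
        - (-Real.sin (α * (Real.pi * (t - 1) / (2 * (t - α)))) * (α * (π*(1-α)/(2*(t-α)^2))))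
            / Real.cos (α * (Real.pi * (t - 1) / (2 * (t - α))))) t := by
  have hπ := Real.pi_pos
  have htα : (0:ℝ) < t - α := by linarith
  have ht0 : (0:ℝ) < t := by linarith
  have hg : HasDerivAt (fun t : ℝ => Real.pi * (t - 1) / (2 * (t - α)))
      (π*(1-α)/(2*(t-α)^2)) t := by
    have h1 : HasDerivAt (fun t:ℝ => Real.pi*(t-1)) (π*1) t :=
      (((hasDerivAt_id t).sub_const 1)).const_mul Real.pi
    have h2 : HasDerivAt (fun t:ℝ => 2*(t-α)) (2*1) t :=
      (((hasDerivAt_id t).sub_const α)).const_mul (2:ℝ)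
    have h3 := h1.div h2 (by positivity)
    refine h3.congr_deriv ?_
    field_simp
    ring
  have ha : HasDerivAt (fun t : ℝ => α * Real.log t) (α * t⁻¹) t :=
    (Real.hasDerivAt_log ht0.ne').const_mul α
  have hb : HasDerivAt (fun t : ℝ =>
      α * Real.log (Real.cos (Real.pi * (t - 1) / (2 * (t - α)))))
      (α * ((-Real.sin (Real.pi * (t - 1) / (2 * (t - α))) * (π*(1-α)/(2*(t-α)^2)))
        / Real.cos (Real.pi * (t - 1) / (2 * (t - α))))) t :=
    ((hg.cos).log (facts_cos_phi_pos hα0 hα1 ht).ne').const_mul α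
  have hc : HasDerivAt (fun t : ℝ =>
      Real.log (Real.cos (α * (Real.pi * (t - 1) / (2 * (t - α))))))
      ((-Real.sin (α * (Real.pi * (t - 1) / (2 * (t - α)))) * (α * (π*(1-α)/(2*(t-α)^2))))
        / Real.cos (α * (Real.pi * (t - 1) / (2 * (t - α))))) t :=
    ((hg.const_mul α).cos).log (facts_cos_alpha_phi_pos hα0 hα1 ht).ne'
  have := (((hasDerivAt_const t ((α - 1) * Real.log 2)).add ha).add hb).sub hc
  refine this.congr_deriv ?_
  ring

lemma Lf_deriv_pos (hα0 : 0 < α) (hα1 : α < 1) (ht : 2 ≤ t) :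
    0 < α * t⁻¹
        + α * ((-Real.sin (Real.pi * (t - 1) / (2 * (t - α))) * (π*(1-α)/(2*(t-α)^2)))
            / Real.cos (Real.pi * (t - 1) / (2 * (t - α))))
        - (-Real.sin (α * (Real.pi * (t - 1) / (2 * (t - α)))) * (α * (π*(1-α)/(2*(t-α)^2))))
            / Real.cos (α * (Real.pi * (t - 1) / (2 * (t - α)))) := by
  have hπ := Real.pi_pos
  have htα : (0:ℝ) < t - α := by linarith
  have h1α : (0:ℝ) < 1 - α := by linarith
  obtain ⟨hψ0, hψπ⟩ := facts_psi hα0 hα1 ht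
  obtain ⟨hs0, hsπ⟩ := facts_s hα0 hα1 ht
  have hsψ : 0 < Real.sin (π*(1-α)/(2*(t-α))) :=
    Real.sin_pos_of_pos_of_lt_pi hψ0 (by linarith)
  have hss : 0 < Real.sin (π*(1-α)/2 + α*(π*(1-α)/(2*(t-α)))) :=
    Real.sin_pos_of_pos_of_lt_pi hs0 (by linarith)
  rw [facts_alpha_phi hα0 hα1 ht, facts_phi hα0 hα1 ht, Real.cos_pi_div_two_sub,
    Real.cos_pi_div_two_sub, Real.sin_pi_div_two_sub, Real.sin_pi_div_two_sub]
  rw [bracket_eq hα0 hα1 ht hsψ.ne' hss.ne']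
  apply mul_pos (by positivity)
  rw [sub_pos]
  exact key_ineq hα0 hα1 hψ0 hψπ rfl

lemma Af_eq_exp_Lf (hα0 : 0 < α) (hα1 : α < 1) (ht : 2 ≤ t) :
    Af α t = Real.exp (Lf α t) := by
  have ht0 : (0:ℝ) < t := by linarith
  have hcφ := facts_cos_phi_pos hα0 hα1 ht
  have hcαφ := facts_cos_alpha_phi_pos hα0 hα1 ht
  rw [Lf, Real.exp_sub, Real.exp_add, Real.exp_add,
    Real.exp_log hcαφ]
  rw [show (α-1) * Real.log 2 = Real.log 2 * (α-1) from mul_comm _ _,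
    show α * Real.log t = Real.log t * α from mul_comm _ _,
    show α * Real.log (Real.cos (Real.pi * (t - 1) / (2 * (t - α))))
      = Real.log (Real.cos (Real.pi * (t - 1) / (2 * (t - α)))) * α from mul_comm _ _,
    ← Real.rpow_def_of_pos (by norm_num : (0:ℝ) < 2),
    ← Real.rpow_def_of_pos ht0, ← Real.rpow_def_of_pos hcφ]
  rfl

lemma Af_strictMonoOn (hα0 : 0 < α) (hα1 : α < 1) : StrictMonoOn (Af α) (Ici (2:ℝ)) := by
  have hL : StrictMonoOn (Lf α) (Ici (2:ℝ)) := by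
    apply strictMonoOn_of_deriv_pos (convex_Ici 2)
    · exact fun x hx => (Lf_hasDerivAt hα0 hα1 hx).continuousAt.continuousWithinAt
    · intro x hx
      rw [interior_Ici] at hx
      rw [(Lf_hasDerivAt hα0 hα1 (le_of_lt hx)).deriv]
      exact Lf_deriv_pos hα0 hα1 (le_of_lt hx)
  intro x hx y hy hxy
  rw [Af_eq_exp_Lf hα0 hα1 hx, Af_eq_exp_Lf hα0 hα1 hy, Real.exp_lt_exp]
  exact hL hx hy hxy
end facts
section limitpart
variable {α : ℝ}

lemma value_eq (hα0 : 0 < α) (hα1 : α < 1) :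
    2^(α-1) * (π*(1-α)/2)^α / Real.cos (α*(π/2))
      = ((1 - α) * π) ^ α * Real.sin (α * π / 2) / Real.sin (α * π) := by
  have hπ := Real.pi_pos
  have hc : 0 < Real.cos (α*(π/2)) := Real.cos_pos_of_mem_Ioo
    ⟨by nlinarith, by nlinarith⟩
  have hs : 0 < Real.sin (α*(π/2)) :=
    Real.sin_pos_of_pos_of_lt_pi (by positivity) (by nlinarith)
  have h2 : Real.sin (α*π) = 2*Real.sin (α*(π/2))*Real.cos (α*(π/2)) := by
    have h := Real.sin_two_mul (α*(π/2))
    rw [show 2*(α*(π/2)) = α*π by ring] at h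
    exact h
  have hXeq : (π*(1-α)/2)^α = ((1-α)*π)^α / 2^α := by
    rw [show π*(1-α)/2 = ((1-α)*π)/2 by ring, Real.div_rpow (by nlinarith) (by norm_num)]
  have h21 : (2:ℝ)^(α-1) = 2^α/2 := by
    rw [Real.rpow_sub (by norm_num), Real.rpow_one]
  have h2α : (0:ℝ) < (2:ℝ)^α := Real.rpow_pos_of_pos two_pos α
  rw [show α*π/2 = α*(π/2) by ring, h2, hXeq, h21]
  generalize hC : Real.cos (α*(π/2)) = C at hc ⊢
  generalize hS : Real.sin (α*(π/2)) = S at hs ⊢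
  generalize hT : (2:ℝ)^α = T at h2α ⊢
  field_simp

lemma Af_tendsto (hα0 : 0 < α) (hα1 : α < 1) :
    Filter.Tendsto (fun k : ℕ => Af α k) Filter.atTop
      (nhds (((1 - α) * π) ^ α * Real.sin (α * π / 2) / Real.sin (α * π))) := by
  have hπ := Real.pi_pos
  have hkα : ∀ k : ℕ, ((k:ℝ) - α) ≠ 0 := by
    intro k
    rcases Nat.eq_zero_or_pos k with rfl|hk
    · simp; intro h; linarith
    · have : (1:ℝ) ≤ (k:ℝ) := by exact_mod_cast hk
      intro h; linarith
  have h1α : (0:ℝ) < 1 - α := by linarith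
  set ψ : ℕ → ℝ := fun k => π*(1-α)/(2*((k:ℝ)-α)) with hψdef
  have hψne : ∀ k, ψ k ≠ 0 := by
    intro k
    apply div_ne_zero (by positivity)
    exact mul_ne_zero two_ne_zero (hkα k)
  have h_inv : Filter.Tendsto (fun k : ℕ => ((k:ℝ) - α)⁻¹) Filter.atTop (nhds 0) := by
    apply Filter.Tendsto.inv_tendsto_atTop
    apply Filter.tendsto_atTop_add_const_right _ (-α)
    exact tendsto_natCast_atTop_atTop
  have hψ_tendsto : Filter.Tendsto ψ Filter.atTop (nhds 0) := by
    have : ψ = fun k : ℕ => (π*(1-α)/2) * ((k:ℝ)-α)⁻¹ := by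
      funext k
      simp only [hψdef, div_eq_mul_inv, mul_inv]
      ring
    rw [this]
    simpa using h_inv.const_mul (π*(1-α)/2)
  have hφ_eq : ∀ k : ℕ, π*((k:ℝ)-1)/(2*((k:ℝ)-α)) = π/2 - ψ k := by
    intro k
    have := hkα k
    simp only [hψdef]
    field_simp
    ring
  have hφ_tendsto : Filter.Tendsto (fun k : ℕ => π*((k:ℝ)-1)/(2*((k:ℝ)-α)))
      Filter.atTop (nhds (π/2)) := by
    simp only [hφ_eq]
    simpa using tendsto_const_nhds.sub hψ_tendsto
  have hcos_tendsto : Filter.Tendsto (fun k : ℕ => Real.cos (α * (π*((k:ℝ)-1)/(2*((k:ℝ)-α)))))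
      Filter.atTop (nhds (Real.cos (α * (π/2)))) :=
    (Real.continuous_cos.tendsto _).comp (hφ_tendsto.const_mul α)
  have hsin_div : Filter.Tendsto (fun k : ℕ => Real.sin (ψ k) / ψ k) Filter.atTop (nhds 1) := by
    have hslope := hasDerivAt_iff_tendsto_slope.mp (Real.hasDerivAt_sin 0)
    have hmap : Filter.Tendsto ψ Filter.atTop (nhdsWithin 0 {(0:ℝ)}ᶜ) :=
      tendsto_nhdsWithin_of_tendsto_nhds_of_eventually_within _ hψ_tendsto
        (Filter.Eventually.of_forall fun k => hψne k)
    have h := hslope.comp hmap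
    rw [Real.cos_zero] at h
    refine h.congr fun k => ?_
    simp [Function.comp, slope_def_field]
  have hkψ : Filter.Tendsto (fun k : ℕ => (k:ℝ) * ψ k) Filter.atTop (nhds (π*(1-α)/2)) := by
    have heq : ∀ k : ℕ, (k:ℝ) * ψ k = (π*(1-α)/2) * (1 + α*((k:ℝ)-α)⁻¹) := by
      intro k
      have := hkα k
      simp only [hψdef]
      field_simp
      ring
    simp only [heq]
    have := ((tendsto_const_nhds (x := (1:ℝ))).add (h_inv.const_mul α)).const_mul (π*(1-α)/2)
    simpa using this
  have hX : Filter.Tendsto (fun k : ℕ => (k:ℝ) * Real.cos (π*((k:ℝ)-1)/(2*((k:ℝ)-α))))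
      Filter.atTop (nhds (π*(1-α)/2)) := by
    have heq : ∀ k : ℕ, (k:ℝ) * Real.cos (π*((k:ℝ)-1)/(2*((k:ℝ)-α)))
        = (Real.sin (ψ k)/ψ k) * ((k:ℝ) * ψ k) := by
      intro k
      rw [hφ_eq k, Real.cos_pi_div_two_sub]
      field_simp [hψne k]
    simp only [heq]
    simpa using hsin_div.mul hkψ
  have hXα := hX.rpow_const (p := α) (Or.inr hα0.le)
  have hcosne : Real.cos (α * (π/2)) ≠ 0 := by
    have : 0 < Real.cos (α*(π/2)) := Real.cos_pos_of_mem_Ioo ⟨by nlinarith, by nlinarith⟩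
    exact this.ne'
  have hfinal := (hXα.const_mul ((2:ℝ)^(α-1))).div hcos_tendsto hcosne
  have hvalue := value_eq hα0 hα1
  rw [hvalue] at hfinal
  apply hfinal.congr'
  filter_upwards [Filter.eventually_ge_atTop 2] with k hk
  have hk2 : (2:ℝ) ≤ (k:ℝ) := by exact_mod_cast hk
  have hknn : (0:ℝ) ≤ (k:ℝ) := by linarith
  have hcnn : (0:ℝ) ≤ Real.cos (π*((k:ℝ)-1)/(2*((k:ℝ)-α))) := by
    have := facts_cos_phi_pos hα0 hα1 hk2
    rw [show Real.pi*((k:ℝ)-1)/(2*((k:ℝ)-α)) = Real.pi*((k:ℝ)-1)/(2*((k:ℝ)-α)) from rfl]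
    exact this.le
  show (2:ℝ)^(α-1) * ((k:ℝ) * Real.cos (π*((k:ℝ)-1)/(2*((k:ℝ)-α))))^α
      / Real.cos (α * (π*((k:ℝ)-1)/(2*((k:ℝ)-α)))) = Af α (k:ℝ)
  rw [Real.mul_rpow hknn hcnn, Af, mul_assoc]
end limitpart

/-- For `α ∈ (0,1)`, the sequence `(a^{(k)})_{k ≥ 2}` is strictly increasing in `k`
and converges to `((1−α)π)^α sin(απ/2)/sin(απ)` as `k → ∞`. -/
theorem aVertex_strictMono_tendsto (α : ℝ) (hα : α ∈ Set.Ioo (0:ℝ) 1) :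
    StrictMonoOn (aVertex α) (Set.Ici 2) ∧
      Filter.Tendsto (fun k : ℕ => aVertex α k) Filter.atTop
        (nhds (((1 - α) * π) ^ α * Real.sin (α * π / 2) / Real.sin (α * π))) := by
  obtain ⟨hα0, hα1⟩ := hα
  constructor
  · intro k hk l hl hkl
    have hk' : (2:ℝ) ≤ (k:ℝ) := by exact_mod_cast hk
    have hl' : (2:ℝ) ≤ (l:ℝ) := by exact_mod_cast hl
    have hkl' : (k:ℝ) < (l:ℝ) := by exact_mod_cast hkl
    exact Af_strictMonoOn hα0 hα1 hk' hl' hkl'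
  · exact Af_tendsto hα0 hα1
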